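/- Let ε ∈ ℝ, k₁ ≠ 0, n ≥ 1 a natural number, and set k₂ := k₁/(2n). Define, for s in an open interval I containing 0 on which 1 + k₁ s² > 0, 1 + k₂ s² > 0 and the radicand below is positive: φ(s) := √( 1 + k₁ s² + ε s √(1 + k₂ s²) · [ (2n)!!/(2n−1)!! − Σ_{k=1}^{n−1} ( 2(n−k)·(2n−2)!!·(2k−3)!! / ((2n−1)!!·(2k)!!) ) · (1 + k₂ s²)^{−k} ] ), where the sum is empty when n = 1 and m!! := 1 for m ≤ 0. Then φ satisfies equation (E) with parameters (k₁, k₁/(2n), 0) on I, and φ(0) = 1, φ'(0) = ε. -/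

import Mathlib

/-- Equation (E) with parameters `k₁ k₂ k₃` for a real function `φ` at the point `s`:
`s(k₂ − k₃ s²)(φφ' − s φ'² − s φφ'') − (φ'² + φφ'') + k₁ φ(φ − s φ') = 0`. -/
def eqE (k₁ k₂ k₃ : ℝ) (φ : ℝ → ℝ) (s : ℝ) : Prop :=
  s * (k₂ - k₃ * s ^ 2) *
      (φ s * deriv φ s - s * (deriv φ s) ^ 2 - s * φ s * deriv (deriv φ) s) -
    ((deriv φ s) ^ 2 + φ s * deriv (deriv φ) s) +
    k₁ * φ s * (φ s - s * deriv φ s) = 0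

/-- The radicand of the solution `φ` in the case `k₂ = k₁/(2n)`, `k₃ = 0`:
`1 + k₁ s² + ε s √(1 + k₂ s²) · [ (2n)‼/(2n−1)‼ −
  Σ_{k=1}^{n−1} 2(n−k)(2n−2)‼(2k−3)‼ / ((2n−1)‼(2k)‼) · (1 + k₂ s²)^{−k} ]`.
Note that for `k = 1` the term `(2k−3)‼` is `(2·1 − 3)‼ = 0‼ = 1` by natural
subtraction, which implements the convention `m‼ = 1` for `m ≤ 0`. -/
noncomputable def rad15 (k₁ k₂ ε : ℝ) (n : ℕ) (s : ℝ) : ℝ :=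
  1 + k₁ * s ^ 2 + ε * s * Real.sqrt (1 + k₂ * s ^ 2) *
    ((Nat.doubleFactorial (2 * n) : ℝ) / (Nat.doubleFactorial (2 * n - 1) : ℝ) -
      ∑ k ∈ Finset.Icc 1 (n - 1),
        ((2 * (n - k) * Nat.doubleFactorial (2 * n - 2) *
            Nat.doubleFactorial (2 * k - 3) : ℕ) : ℝ) /
          ((Nat.doubleFactorial (2 * n - 1) * Nat.doubleFactorial (2 * k) : ℕ) : ℝ) *
          (1 + k₂ * s ^ 2) ^ (-(k : ℤ)))

section Helpers
open Real Finset Nat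

noncomputable def pf (k₂ : ℝ) (k : ℕ) (s : ℝ) : ℝ :=
  Real.sqrt (1 + k₂ * s ^ 2) * (1 + k₂ * s ^ 2) ^ (-(k : ℤ))

lemma hasDerivAt_pf {k₂ s : ℝ} (hu : 0 < 1 + k₂ * s ^ 2) (k : ℕ) :
    HasDerivAt (pf k₂ k) ((1 - 2 * (k : ℝ)) * k₂ * s * pf k₂ (k + 1) s) s := by
  have hu' : (1 + k₂ * s ^ 2) ≠ 0 := ne_of_gt hu
  have hsq : Real.sqrt (1 + k₂ * s ^ 2) ^ 2 = 1 + k₂ * s ^ 2 := Real.sq_sqrt hu.le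
  have hsqpos : 0 < Real.sqrt (1 + k₂ * s ^ 2) := Real.sqrt_pos.2 hu
  have hU : HasDerivAt (fun t : ℝ => 1 + k₂ * t ^ 2) (2 * k₂ * s) s := by
    have := ((hasDerivAt_pow 2 s).const_mul k₂).const_add 1
    simpa [mul_comm, mul_assoc, mul_left_comm] using this
  have h1 : HasDerivAt (fun t : ℝ => Real.sqrt (1 + k₂ * t ^ 2))
      ((2 * k₂ * s) / (2 * Real.sqrt (1 + k₂ * s ^ 2))) s := hU.sqrt hu'
  have h2 : HasDerivAt (fun t : ℝ => (1 + k₂ * t ^ 2) ^ (-(k : ℤ)))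
      (((-(k : ℤ)) : ℝ) * (1 + k₂ * s ^ 2) ^ ((-(k : ℤ)) - 1) * (2 * k₂ * s)) s := by
    simpa [Function.comp_def] using (hasDerivAt_zpow (-(k : ℤ)) _ (Or.inl hu')).comp s hU
  have h3 := h1.mul h2
  refine h3.congr_deriv (Eq.symm ?_)
  unfold pf
  have he : (-(((k:ℕ)+1 : ℕ) : ℤ)) = -(k : ℤ) - 1 := by push_cast; ring
  have hz2 : (1 + k₂ * s ^ 2) ^ (-(k : ℤ)) =
      (1 + k₂ * s ^ 2) ^ (-(k:ℤ) - 1) * (1 + k₂ * s ^ 2) := by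
    rw [← zpow_add_one₀ hu']; norm_num
  rw [he, hz2]
  set r := Real.sqrt (1 + k₂ * s ^ 2)
  set w := (1 + k₂ * s ^ 2) ^ (-(k:ℤ) - 1)
  field_simp
  linear_combination (k₂ * s * w) * hsq


noncomputable def cc (n k : ℕ) : ℝ :=
  ((2 * (n - k) * Nat.doubleFactorial (2 * n - 2) * Nat.doubleFactorial (2 * k - 3) : ℕ) : ℝ) /
    ((Nat.doubleFactorial (2 * n - 1) * Nat.doubleFactorial (2 * k) : ℕ) : ℝ)

noncomputable def C0 (n : ℕ) : ℝ :=
  (Nat.doubleFactorial (2 * n) : ℝ) / (Nat.doubleFactorial (2 * n - 1) : ℝ)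

noncomputable def f1 (k₁ k₂ ε : ℝ) (n : ℕ) (s : ℝ) : ℝ :=
  2 * k₁ * s + ε * (C0 n * (pf k₂ 0 s + k₂ * s ^ 2 * pf k₂ 1 s) -
    ∑ k ∈ Finset.Icc 1 (n - 1),
      cc n k * (pf k₂ k s + (1 - 2 * (k : ℝ)) * k₂ * s ^ 2 * pf k₂ (k + 1) s))

noncomputable def f2 (k₁ k₂ ε : ℝ) (n : ℕ) (s : ℝ) : ℝ :=
  2 * k₁ + ε * (C0 n * (k₂ * s * (3 * pf k₂ 1 s - k₂ * s ^ 2 * pf k₂ 2 s)) -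
    ∑ k ∈ Finset.Icc 1 (n - 1),
      cc n k * ((1 - 2 * (k : ℝ)) * k₂ * s *
        (3 * pf k₂ (k + 1) s - (1 + 2 * (k : ℝ)) * k₂ * s ^ 2 * pf k₂ (k + 2) s)))

lemma rad15_eq (k₁ k₂ ε : ℝ) (n : ℕ) (s : ℝ) :
    rad15 k₁ k₂ ε n s = 1 + k₁ * s ^ 2 +
      ε * (C0 n * (s * pf k₂ 0 s) -
        ∑ k ∈ Finset.Icc 1 (n - 1), cc n k * (s * pf k₂ k s)) := by
  unfold rad15 C0 cc pf
  congr 1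
  rw [mul_sub, mul_sub, Finset.mul_sum, Finset.mul_sum]
  congr 1
  · simp only [Nat.cast_ofNat, CharP.cast_eq_zero, neg_zero, zpow_zero, mul_one]
    ring
  · exact Finset.sum_congr rfl (fun k hk => by push_cast; ring)
lemma hasDerivAt_h {k₂ s : ℝ} (hu : 0 < 1 + k₂ * s ^ 2) (k : ℕ) :
    HasDerivAt (fun t => t * pf k₂ k t)
      (pf k₂ k s + (1 - 2 * (k : ℝ)) * k₂ * s ^ 2 * pf k₂ (k + 1) s) s := by
  have := (hasDerivAt_id s).mul (hasDerivAt_pf hu k)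
  refine this.congr_deriv (Eq.symm ?_)
  simp only [id_eq]
  ring

lemma hasDerivAt_rad {k₁ k₂ ε : ℝ} {n : ℕ} {s : ℝ} (hu : 0 < 1 + k₂ * s ^ 2) :
    HasDerivAt (rad15 k₁ k₂ ε n) (f1 k₁ k₂ ε n s) s := by
  have hre : rad15 k₁ k₂ ε n = fun t => 1 + k₁ * t ^ 2 +
      ε * (C0 n * (t * pf k₂ 0 t) -
        ∑ k ∈ Finset.Icc 1 (n - 1), cc n k * (t * pf k₂ k t)) :=
    funext (rad15_eq k₁ k₂ ε n)
  rw [hre]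
  have hsum : HasDerivAt (fun t => ∑ k ∈ Finset.Icc 1 (n - 1), cc n k * (t * pf k₂ k t))
      (∑ k ∈ Finset.Icc 1 (n - 1),
        cc n k * (pf k₂ k s + (1 - 2 * (k : ℝ)) * k₂ * s ^ 2 * pf k₂ (k + 1) s)) s :=
    HasDerivAt.fun_sum (fun k _ => (hasDerivAt_h hu k).const_mul _)
  have h0 := (hasDerivAt_h hu 0).const_mul (C0 n)
  have hpow := ((hasDerivAt_pow 2 s).const_mul k₁).const_add 1
  have := hpow.add (((h0.sub hsum).const_mul ε))
  refine this.congr_deriv (Eq.symm ?_)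
  unfold f1
  push_cast
  ring

lemma hasDerivAt_f1 {k₁ k₂ ε : ℝ} {n : ℕ} {s : ℝ} (hu : 0 < 1 + k₂ * s ^ 2) :
    HasDerivAt (f1 k₁ k₂ ε n) (f2 k₁ k₂ ε n s) s := by
  have hq : ∀ k : ℕ, HasDerivAt
      (fun t => pf k₂ k t + (1 - 2 * (k : ℝ)) * k₂ * t ^ 2 * pf k₂ (k + 1) t)
      ((1 - 2 * (k : ℝ)) * k₂ * s *
        (3 * pf k₂ (k + 1) s - (1 + 2 * (k : ℝ)) * k₂ * s ^ 2 * pf k₂ (k + 2) s)) s := by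
    intro k
    have h1 := hasDerivAt_pf hu k
    have h2 := (((hasDerivAt_pow 2 s).const_mul ((1 - 2 * (k : ℝ)) * k₂)).mul
      (hasDerivAt_pf hu (k + 1)))
    have h3 := h1.add h2
    have : (fun t => pf k₂ k t + (1 - 2 * (k : ℝ)) * k₂ * t ^ 2 * pf k₂ (k + 1) t)
        = (fun t => pf k₂ k t + ((1 - 2 * (k : ℝ)) * k₂ * t ^ 2) * pf k₂ (k + 1) t) := by
      funext t; ring
    rw [this]
    refine h3.congr_deriv (Eq.symm ?_)
    push_cast
    ring
  have hsum : HasDerivAt (fun t => ∑ k ∈ Finset.Icc 1 (n - 1),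
      cc n k * (pf k₂ k t + (1 - 2 * (k : ℝ)) * k₂ * t ^ 2 * pf k₂ (k + 1) t))
      (∑ k ∈ Finset.Icc 1 (n - 1), cc n k * ((1 - 2 * (k : ℝ)) * k₂ * s *
        (3 * pf k₂ (k + 1) s - (1 + 2 * (k : ℝ)) * k₂ * s ^ 2 * pf k₂ (k + 2) s))) s :=
    HasDerivAt.fun_sum (fun k _ => (hq k).const_mul _)
  have h00 : HasDerivAt (fun t => pf k₂ 0 t + k₂ * t ^ 2 * pf k₂ 1 t)
      (k₂ * s * (3 * pf k₂ 1 s - k₂ * s ^ 2 * pf k₂ 2 s)) s := by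
    have := hq 0
    have he : (fun t => pf k₂ 0 t + (1 - 2 * ((0:ℕ) : ℝ)) * k₂ * t ^ 2 * pf k₂ (0 + 1) t)
        = (fun t => pf k₂ 0 t + k₂ * t ^ 2 * pf k₂ 1 t) := by
      funext t; norm_num
    rw [he] at this
    convert this using 1
    norm_num
  have hlin : HasDerivAt (fun t : ℝ => 2 * k₁ * t) (2 * k₁) s := by
    simpa using (hasDerivAt_id s).const_mul (2 * k₁)
  have := hlin.add (((h00.const_mul (C0 n)).sub hsum).const_mul ε)
  have hfe : f1 k₁ k₂ ε n = fun t => 2 * k₁ * t +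
      ε * (C0 n * (pf k₂ 0 t + k₂ * t ^ 2 * pf k₂ 1 t) -
        ∑ k ∈ Finset.Icc 1 (n - 1),
          cc n k * (pf k₂ k t + (1 - 2 * (k : ℝ)) * k₂ * t ^ 2 * pf k₂ (k + 1) t)) := by
    funext t; unfold f1; ring
  rw [hfe]
  exact this
lemma uP {k₂ s : ℝ} (hu : 0 < 1 + k₂ * s ^ 2) (j : ℕ) :
    pf k₂ j s = (1 + k₂ * s ^ 2) * pf k₂ (j + 1) s := by
  have hu' := hu.ne'
  unfold pf
  rw [show (-(j:ℤ)) = 1 + -(((j:ℕ)+1 : ℕ) : ℤ) by push_cast; ring, zpow_add₀ hu']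
  rw [zpow_one]; ring

lemma resid {k₂ s : ℝ} (hu : 0 < 1 + k₂ * s ^ 2) (n k : ℕ) :
    (1 + k₂ * s ^ 2) * ((1 - 2 * (k : ℝ)) * k₂ * s *
        (3 * pf k₂ (k + 1) s - (1 + 2 * (k : ℝ)) * k₂ * s ^ 2 * pf k₂ (k + 2) s)) -
      (k₂ - 2 * (n : ℝ) * k₂) * s *
        (pf k₂ k s + (1 - 2 * (k : ℝ)) * k₂ * s ^ 2 * pf k₂ (k + 1) s) -
      2 * (2 * (n : ℝ) * k₂) * (s * pf k₂ k s) =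
    2 * k₂ * s * (2 * (k : ℝ) * ((k : ℝ) - n - 1) * pf k₂ k s -
      (2 * (k : ℝ) - 1) * ((k : ℝ) - n + 1) * pf k₂ (k + 1) s) := by
  have e : k + 1 + 1 = k + 2 := by omega
  have h1 := uP hu k
  have h2 := uP hu (k + 1)
  rw [e] at h2
  rw [h1, h2]
  ring
lemma cc_zero (n k : ℕ) (hk : n ≤ k) : cc n k = 0 := by
  unfold cc
  rw [Nat.sub_eq_zero_of_le hk]
  simp

lemma dfA (k : ℕ) (hk : 1 ≤ k) :
    Nat.doubleFactorial (2 * (k + 1) - 3) = (2 * k - 1) * Nat.doubleFactorial (2 * k - 3) := by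
  match k, hk with
  | 1, _ => decide
  | (j+2), _ =>
    have e1 : 2 * ((j + 2) + 1) - 3 = (2 * j + 1) + 2 := by omega
    have e2 : 2 * (j + 2) - 1 = 2 * j + 1 + 2 := by omega
    have e3 : 2 * (j + 2) - 3 = 2 * j + 1 := by omega
    rw [e1, e2, e3, Nat.doubleFactorial_add_two]

lemma dfB (k : ℕ) :
    Nat.doubleFactorial (2 * (k + 1)) = (2 * k + 2) * Nat.doubleFactorial (2 * k) := by
  have e : 2 * (k + 1) = 2 * k + 2 := by omega
  rw [e, Nat.doubleFactorial_add_two]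

lemma den_ne (m l : ℕ) :
    ((Nat.doubleFactorial m * Nat.doubleFactorial l : ℕ) : ℝ) ≠ 0 := by
  have := Nat.doubleFactorial_pos m
  have := Nat.doubleFactorial_pos l
  positivity

lemma ccrec (n k : ℕ) (hk : 1 ≤ k) :
    (2 * (k : ℝ) - 1) * ((k : ℝ) + 1 - n) * cc n k
      = 2 * ((k : ℝ) + 1) * ((k : ℝ) - n) * cc n (k + 1) := by
  rcases le_or_gt n k with h | h
  · rw [cc_zero n k h, cc_zero n (k + 1) (by omega)]; ring
  · unfold cc
    rw [dfA k hk, dfB k]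
    have d1 := den_ne (2 * n - 1) (2 * k)
    have d2 : ((Nat.doubleFactorial (2*n-1) * ((2 * k + 2) * Nat.doubleFactorial (2*k)) : ℕ) : ℝ) ≠ 0 := by
      have := Nat.doubleFactorial_pos (2*n-1)
      have := Nat.doubleFactorial_pos (2*k)
      positivity
    field_simp
    push_cast [Nat.cast_sub h.le, Nat.cast_sub (by omega : k + 1 ≤ n), Nat.cast_sub (by omega : 1 ≤ 2 * k), Nat.cast_sub (by omega : 1 ≤ k * 2)]
    ring
lemma cc1 (n : ℕ) (hn : 1 ≤ n) : 2 * (n : ℝ) * cc n 1 = ((n : ℝ) - 1) * C0 n := by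
  unfold cc C0
  have h2n : Nat.doubleFactorial (2 * n) = 2 * n * Nat.doubleFactorial (2 * n - 2) := by
    have e : 2 * n = (2 * n - 2) + 2 := by omega
    rw [e, Nat.doubleFactorial_add_two, ← e]
  have d1 : ((Nat.doubleFactorial (2 * n - 1) : ℕ) : ℝ) ≠ 0 := by
    have := Nat.doubleFactorial_pos (2 * n - 1); positivity
  have d2 := den_ne (2 * n - 1) (2 * 1)
  rw [h2n]
  norm_num [Nat.doubleFactorial]
  field_simp
  push_cast [Nat.cast_sub hn]
  ring

lemma tele (n : ℕ) (hn : 1 ≤ n) (P : ℕ → ℝ) :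
    ∑ k ∈ Finset.Icc 1 (n - 1),
      cc n k * (2 * (k : ℝ) * ((k : ℝ) - n - 1) * P k -
        (2 * (k : ℝ) - 1) * ((k : ℝ) - n + 1) * P (k + 1))
      = (1 - (n : ℝ)) * C0 n * P 1 := by
  set F : ℕ → ℝ := fun k => 2 * (k : ℝ) * ((k : ℝ) - n - 1) * cc n k * P k with hF
  have hstep : ∀ k ∈ Finset.Icc 1 (n - 1),
      cc n k * (2 * (k : ℝ) * ((k : ℝ) - n - 1) * P k -
        (2 * (k : ℝ) - 1) * ((k : ℝ) - n + 1) * P (k + 1)) = F k - F (k + 1) := by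
    intro k hk
    simp only [Finset.mem_Icc] at hk
    have hrec := ccrec n k hk.1
    simp only [hF]
    push_cast
    linear_combination (-(P (k + 1))) * hrec
  rw [Finset.sum_congr rfl hstep]
  rw [show Finset.Icc 1 (n - 1) = Finset.Ico 1 n from
    Finset.ext fun x => by simp only [Finset.mem_Icc, Finset.mem_Ico]; omega]
  rw [Finset.sum_Ico_eq_sum_range]
  have htel := Finset.sum_range_sub' (fun i => F (1 + i)) (n - 1)
  simp only [← add_assoc] at htel
  rw [htel, show 1 + (n - 1) = n from by omega]
  have hFn : F n = 0 := by simp only [hF, cc_zero n n le_rfl]; ring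
  rw [hFn]
  simp only [hF]
  push_cast
  linear_combination (-(P 1)) * cc1 n hn
lemma ode {k₁ k₂ ε : ℝ} {n : ℕ} {s : ℝ} (hn : 1 ≤ n) (hk : k₁ = 2 * (n : ℝ) * k₂)
    (hu : 0 < 1 + k₂ * s ^ 2) :
    (1 + k₂ * s ^ 2) * f2 k₁ k₂ ε n s
      = (k₂ - k₁) * s * f1 k₁ k₂ ε n s + 2 * k₁ * rad15 k₁ k₂ ε n s := by
  subst hk
  rw [rad15_eq]
  have key := fun k => resid hu n k
  have hS : (1 + k₂ * s ^ 2) * (∑ k ∈ Finset.Icc 1 (n - 1),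
        cc n k * ((1 - 2 * (k : ℝ)) * k₂ * s *
          (3 * pf k₂ (k + 1) s - (1 + 2 * (k : ℝ)) * k₂ * s ^ 2 * pf k₂ (k + 2) s)))
      - (k₂ - 2 * (n : ℝ) * k₂) * s * (∑ k ∈ Finset.Icc 1 (n - 1),
        cc n k * (pf k₂ k s + (1 - 2 * (k : ℝ)) * k₂ * s ^ 2 * pf k₂ (k + 1) s))
      - 2 * (2 * (n : ℝ) * k₂) * (∑ k ∈ Finset.Icc 1 (n - 1),
        cc n k * (s * pf k₂ k s))
      = 2 * k₂ * s * ((1 - (n : ℝ)) * C0 n * pf k₂ 1 s) := by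
    rw [Finset.mul_sum, Finset.mul_sum, Finset.mul_sum, ← Finset.sum_sub_distrib,
      ← Finset.sum_sub_distrib]
    have : ∀ k ∈ Finset.Icc 1 (n - 1),
        (1 + k₂ * s ^ 2) * (cc n k * ((1 - 2 * (k : ℝ)) * k₂ * s *
          (3 * pf k₂ (k + 1) s - (1 + 2 * (k : ℝ)) * k₂ * s ^ 2 * pf k₂ (k + 2) s)))
        - (k₂ - 2 * (n : ℝ) * k₂) * s * (cc n k *
          (pf k₂ k s + (1 - 2 * (k : ℝ)) * k₂ * s ^ 2 * pf k₂ (k + 1) s))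
        - 2 * (2 * (n : ℝ) * k₂) * (cc n k * (s * pf k₂ k s))
        = 2 * k₂ * s * (cc n k * (2 * (k : ℝ) * ((k : ℝ) - n - 1) * pf k₂ k s -
            (2 * (k : ℝ) - 1) * ((k : ℝ) - n + 1) * pf k₂ (k + 1) s)) := by
      intro k _
      linear_combination (cc n k) * key k
    rw [Finset.sum_congr rfl this, ← Finset.mul_sum, tele n hn (fun k => pf k₂ k s)]
  have key0 := key 0
  norm_num at key0
  unfold f1 f2
  set S2 := ∑ k ∈ Finset.Icc 1 (n - 1),
      cc n k * ((1 - 2 * (k : ℝ)) * k₂ * s *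
        (3 * pf k₂ (k + 1) s - (1 + 2 * (k : ℝ)) * k₂ * s ^ 2 * pf k₂ (k + 2) s)) with hS2
  set S1 := ∑ k ∈ Finset.Icc 1 (n - 1),
      cc n k * (pf k₂ k s + (1 - 2 * (k : ℝ)) * k₂ * s ^ 2 * pf k₂ (k + 1) s) with hS1
  set S0 := ∑ k ∈ Finset.Icc 1 (n - 1), cc n k * (s * pf k₂ k s) with hS0
  linear_combination (-ε) * hS + (ε * C0 n) * key0

noncomputable def tt (k : ℕ) : ℝ :=
  (Nat.doubleFactorial (2 * k - 3) : ℝ) / (Nat.doubleFactorial (2 * k) : ℝ)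

lemma dfpos (m : ℕ) : (0:ℝ) < (Nat.doubleFactorial m : ℝ) := by
  exact_mod_cast Nat.doubleFactorial_pos m

lemma lemA (n : ℕ) (hn : 1 ≤ n) :
    ∑ k ∈ Finset.Icc 1 n, tt k
      = 1 - (Nat.doubleFactorial (2 * n + 1) : ℝ) / (Nat.doubleFactorial (2 * n) : ℝ)
        + (Nat.doubleFactorial (2 * n - 1) : ℝ) / (Nat.doubleFactorial (2 * n - 2) : ℝ) := by
  induction n with
  | zero => omega
  | succ m ih =>
    rcases Nat.eq_or_lt_of_le hn with h1 | h1
    · simp only [← h1]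
      norm_num [tt, show Nat.doubleFactorial 3 = 3 from by decide,
        show Nat.doubleFactorial 2 = 2 from by decide,
        show Nat.doubleFactorial 1 = 1 from by decide,
        show Nat.doubleFactorial 0 = 1 from by decide]
    · have hm : 1 ≤ m := by omega
      rw [Finset.sum_Icc_succ_top (by omega : 1 ≤ m + 1), ih hm]
      have f1 : Nat.doubleFactorial (2 * m + 3) = (2 * m + 3) * Nat.doubleFactorial (2 * m + 1) := by
        rw [show 2 * m + 3 = (2 * m + 1) + 2 from by omega, Nat.doubleFactorial_add_two]
      have f3 : Nat.doubleFactorial (2 * m + 1) = (2 * m + 1) * Nat.doubleFactorial (2 * m - 1) := by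
        rw [show 2 * m + 1 = (2 * m - 1) + 2 from by omega, Nat.doubleFactorial_add_two]
      have f4 : Nat.doubleFactorial (2 * m + 2) = (2 * m + 2) * Nat.doubleFactorial (2 * m) := by
        rw [show 2 * m + 2 = (2 * m) + 2 from by omega, Nat.doubleFactorial_add_two]
      have f5 : Nat.doubleFactorial (2 * m) = (2 * m) * Nat.doubleFactorial (2 * m - 2) := by
        rw [show 2 * m = (2 * m - 2) + 2 from by omega, Nat.doubleFactorial_add_two]
        simp only [Nat.add_sub_cancel]
      have e1 : 2 * (m + 1) - 3 = 2 * m - 1 := by omega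
      have e2 : 2 * (m + 1) = 2 * m + 2 := by omega
      have e3 : 2 * (m + 1) + 1 = 2 * m + 3 := by omega
      have e4 : 2 * (m + 1) - 1 = 2 * m + 1 := by omega
      have e5 : 2 * (m + 1) - 2 = 2 * m := by omega
      unfold tt
      rw [e1, e3, e4, e5, e2, f1, f4, f3, f5]
      have d1 := dfpos (2 * m - 1)
      have d2 := dfpos (2 * m - 2)
      field_simp
      push_cast
      ring

lemma lemB' (n : ℕ) (hn : 1 ≤ n) :
    ∑ k ∈ Finset.Icc 1 (n - 1), 2 * ((n : ℝ) - k) * tt k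
      = 2 * n - 2 * (Nat.doubleFactorial (2 * n - 1) : ℝ)
          / (Nat.doubleFactorial (2 * n - 2) : ℝ) := by
  induction n with
  | zero => omega
  | succ m ih =>
    rcases Nat.eq_or_lt_of_le hn with h1 | h1
    · simp only [← h1]
      norm_num [show Nat.doubleFactorial 1 = 1 from by decide,
        show Nat.doubleFactorial 0 = 1 from by decide]
    · have hm : 1 ≤ m := by omega
      have hnm : m ∉ Finset.Icc 1 (m - 1) := by
        simp only [Finset.mem_Icc]
        omega
      have hins : Finset.Icc 1 m = insert m (Finset.Icc 1 (m - 1)) :=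
        Finset.ext fun x => by
          simp only [Finset.mem_Icc, Finset.mem_insert]
          omega
      have hA := lemA m hm
      rw [hins, Finset.sum_insert hnm] at hA
      have e4 : 2 * (m + 1) - 1 = 2 * m + 1 := by omega
      have e5 : 2 * (m + 1) - 2 = 2 * m := by omega
      rw [show m + 1 - 1 = m from rfl, e4, e5, hins, Finset.sum_insert hnm]
      have hcong : ∀ k ∈ Finset.Icc 1 (m - 1),
          2 * (((m + 1 : ℕ) : ℝ) - k) * tt k = 2 * ((m : ℝ) - k) * tt k + 2 * tt k := by
        intro k _
        push_cast
        ring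
      rw [Finset.sum_congr rfl hcong, Finset.sum_add_distrib, ih hm, ← Finset.mul_sum]
      push_cast
      linear_combination 2 * hA

lemma lemB (n : ℕ) (hn : 1 ≤ n) :
    ∑ k ∈ Finset.Icc 1 (n - 1), cc n k = C0 n - 2 := by
  have hterm : ∀ k ∈ Finset.Icc 1 (n - 1),
      cc n k = (Nat.doubleFactorial (2 * n - 2) : ℝ) / (Nat.doubleFactorial (2 * n - 1) : ℝ)
        * (2 * ((n : ℝ) - k) * tt k) := by
    intro k hk
    simp only [Finset.mem_Icc] at hk
    unfold cc tt
    have d0 := dfpos (2 * n - 1)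
    have d1 := dfpos (2 * n - 2)
    have d2 := dfpos (2 * k)
    have d3 := dfpos (2 * k - 3)
    push_cast [Nat.cast_sub (by omega : k ≤ n)]
    field_simp
  rw [Finset.sum_congr rfl hterm, ← Finset.mul_sum, lemB' n hn]
  unfold C0
  have f : Nat.doubleFactorial (2 * n) = (2 * n) * Nat.doubleFactorial (2 * n - 2) := by
    rw [show 2 * n = (2 * n - 2) + 2 from by omega, Nat.doubleFactorial_add_two]
    simp only [Nat.add_sub_cancel]
  rw [f]
  have d0 := dfpos (2 * n - 1)
  have d1 := dfpos (2 * n - 2)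
  field_simp
  push_cast
  ring

lemma alg (k₁ k₂ s r g1 g2 : ℝ) (hr : r ≠ 0)
    (hODE : (1 + k₂ * s ^ 2) * g2 = (k₂ - k₁) * s * g1 + 2 * k₁ * r ^ 2) :
    s * (k₂ - 0 * s ^ 2) *
        (r * (g1 / (2 * r)) - s * (g1 / (2 * r)) ^ 2 -
          s * r * ((g2 * (2 * r) - g1 * (2 * (g1 / (2 * r)))) / (2 * r) ^ 2)) -
      ((g1 / (2 * r)) ^ 2 + r * ((g2 * (2 * r) - g1 * (2 * (g1 / (2 * r)))) / (2 * r) ^ 2)) +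
      k₁ * r * (r - s * (g1 / (2 * r))) = 0 := by
  field_simp
  linear_combination (-2 * r ^ 2) * hODE

lemma pf_zero (k₂ : ℝ) (k : ℕ) : pf k₂ k 0 = 1 := by
  unfold pf
  norm_num

lemma rad_zero (k₁ k₂ ε : ℝ) (n : ℕ) : rad15 k₁ k₂ ε n 0 = 1 := by
  unfold rad15
  norm_num

lemma f1_zero (k₁ k₂ ε : ℝ) (n : ℕ) (hn : 1 ≤ n) : f1 k₁ k₂ ε n 0 = 2 * ε := by
  unfold f1
  simp only [pf_zero]
  rw [Finset.sum_congr rfl (fun k _ => by norm_num : ∀ k ∈ Finset.Icc 1 (n-1),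
    cc n k * ((1:ℝ) + (1 - 2 * (k : ℝ)) * k₂ * 0 ^ 2 * 1) = cc n k), lemB n hn]
  norm_num
  ring

theorem stmt15 (k₁ k₂ ε : ℝ) (hk₁ : k₁ ≠ 0) (n : ℕ) (hn : 1 ≤ n)
    (hk₂ : k₂ = k₁ / (2 * n)) (a b : ℝ) (ha : a < 0) (hb : 0 < b)
    (hpos : ∀ s ∈ Set.Ioo a b,
      0 < 1 + k₁ * s ^ 2 ∧ 0 < 1 + k₂ * s ^ 2 ∧ 0 < rad15 k₁ k₂ ε n s) :
    (∀ s ∈ Set.Ioo a b,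
      eqE k₁ (k₁ / (2 * n)) 0 (fun t => Real.sqrt (rad15 k₁ k₂ ε n t)) s) ∧
    (fun t => Real.sqrt (rad15 k₁ k₂ ε n t)) 0 = 1 ∧
    deriv (fun t => Real.sqrt (rad15 k₁ k₂ ε n t)) 0 = ε := by
  have hnR : (0:ℝ) < (n:ℝ) := by exact_mod_cast hn
  have hk₁n : k₁ = 2 * (n : ℝ) * k₂ := by
    rw [hk₂]
    field_simp
  have h0mem : (0:ℝ) ∈ Set.Ioo a b := ⟨ha, hb⟩
  have hder : ∀ s ∈ Set.Ioo a b, HasDerivAt (fun t => Real.sqrt (rad15 k₁ k₂ ε n t))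
      (f1 k₁ k₂ ε n s / (2 * Real.sqrt (rad15 k₁ k₂ ε n s))) s := fun s hs =>
    (hasDerivAt_rad (hpos s hs).2.1).sqrt (ne_of_gt (hpos s hs).2.2)
  refine ⟨?_, ?_, ?_⟩
  · intro s hs
    obtain ⟨h1, hu, hr⟩ := hpos s hs
    set r := Real.sqrt (rad15 k₁ k₂ ε n s) with hrdef
    have hrpos : 0 < r := Real.sqrt_pos.2 hr
    have hr2 : r ^ 2 = rad15 k₁ k₂ ε n s := Real.sq_sqrt hr.le
    have hφ1 : HasDerivAt (fun t => f1 k₁ k₂ ε n t / (2 * Real.sqrt (rad15 k₁ k₂ ε n t)))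
        ((f2 k₁ k₂ ε n s * (2 * r) - f1 k₁ k₂ ε n s * (2 * (f1 k₁ k₂ ε n s / (2 * r))))
          / (2 * r) ^ 2) s :=
      (hasDerivAt_f1 hu).div
        (((hasDerivAt_rad hu).sqrt (ne_of_gt hr)).const_mul 2) (by positivity)
    have hEE : deriv (fun t => Real.sqrt (rad15 k₁ k₂ ε n t)) =ᶠ[nhds s]
        (fun t => f1 k₁ k₂ ε n t / (2 * Real.sqrt (rad15 k₁ k₂ ε n t))) := by
      filter_upwards [isOpen_Ioo.mem_nhds hs] with t ht using (hder t ht).deriv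
    have hd1 : deriv (fun t => Real.sqrt (rad15 k₁ k₂ ε n t)) s
        = f1 k₁ k₂ ε n s / (2 * r) := (hder s hs).deriv
    have hd2 : deriv (deriv (fun t => Real.sqrt (rad15 k₁ k₂ ε n t))) s
        = (f2 k₁ k₂ ε n s * (2 * r) - f1 k₁ k₂ ε n s * (2 * (f1 k₁ k₂ ε n s / (2 * r))))
          / (2 * r) ^ 2 := by
      rw [hEE.deriv_eq]
      exact hφ1.deriv
    have hODE := ode (ε := ε) hn hk₁n hu
    rw [← hr2] at hODE
    unfold eqE
    rw [hd1, hd2, ← hk₂]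
    show s * (k₂ - 0 * s ^ 2) * (r * (f1 k₁ k₂ ε n s / (2 * r)) - _ - _) - _ + k₁ * r * (r - _) = 0
    exact alg k₁ k₂ s r _ _ (ne_of_gt hrpos) hODE
  · show Real.sqrt (rad15 k₁ k₂ ε n 0) = 1
    rw [rad_zero, Real.sqrt_one]
  · have := (hder 0 h0mem).deriv
    rw [this, rad_zero, Real.sqrt_one, f1_zero k₁ k₂ ε n hn]
    ring
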